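/- Let K be a compact Hausdorff space, ι an uncountable type, and U : ι → Set K a family of pairwise disjoint nonempty clopen subsets of K such that each U α admits a Cantor scheme of clopen subsets of K with A [] = U α. Let 𝒫 : Set (Set ℝ) be a family of compact subsets of ℝ with {0} ∉ 𝒫, and assume there exists P ∈ 𝒫 such that for every sequence c : ℕ → ℝ tending to 0 (Tendsto c atTop (nhds 0)) with c not identically zero, the set (⋃ i, c i • P) ∪ {0} belongs to 𝒫. Then there exists a linear isometry T : c₀(ι) →ₗᵢ C(K, ℝ) such that Set.range (T g) ∈ 𝒫 for every g ≠ 0. -/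

import Mathlib

open scoped ZeroAtInfty Pointwise

/-- A Cantor scheme of clopen subsets of `X ⊆ K`. -/
def IsClopenCantorScheme {K : Type*} [TopologicalSpace K] (X : Set K)
    (A : List Bool → Set K) : Prop :=
  A [] = X ∧ (∀ s, (A s).Nonempty) ∧ (∀ s, IsClopen (A s)) ∧
    (∀ (s : List Bool) (i : Bool), A (s ++ [i]) ⊆ A s) ∧
    ∀ s : List Bool, A (s ++ [false]) ∩ A (s ++ [true]) = ∅

open Filter Set


open Filter Set

noncomputable def qsets (Q : Set ℝ) : List Bool → Set ℝ
  | [] => Q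
  | b :: s =>
      qsets Q s ∩ (if b then Set.Ici ((sInf (qsets Q s) + sSup (qsets Q s)) / 2)
        else Set.Iic ((sInf (qsets Q s) + sSup (qsets Q s)) / 2))

lemma qsets_subset (Q : Set ℝ) (b : Bool) (s : List Bool) : qsets Q (b :: s) ⊆ qsets Q s := by
  simp [qsets]

lemma qsets_compact {Q : Set ℝ} (hQc : IsCompact Q) : ∀ s, IsCompact (qsets Q s)
  | [] => hQc
  | b :: s => by
      have := qsets_compact hQc s
      cases b
      · exact this.inter_right isClosed_Iic
      · exact this.inter_right isClosed_Ici

lemma qsets_nonempty {Q : Set ℝ} (hQc : IsCompact Q) (hQne : Q.Nonempty) :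
    ∀ s, (qsets Q s).Nonempty
  | [] => hQne
  | b :: s => by
      have hc := qsets_compact hQc (Q := Q) s
      have hn := qsets_nonempty hQc hQne s
      have h1 : sInf (qsets Q s) ∈ qsets Q s := hc.sInf_mem hn
      have h2 : sSup (qsets Q s) ∈ qsets Q s := hc.sSup_mem hn
      have hle : sInf (qsets Q s) ≤ sSup (qsets Q s) := csInf_le_csSup hn hc.bddBelow hc.bddAbove
      cases b
      · refine ⟨sInf (qsets Q s), ?_⟩
        simp only [qsets, if_neg Bool.false_ne_true, mem_inter_iff, mem_Iic]
        exact ⟨h1, by linarith⟩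
      · refine ⟨sSup (qsets Q s), ?_⟩
        simp only [qsets, if_pos, mem_inter_iff, mem_Ici]
        refine ⟨h2, ?_⟩
        linarith

lemma qsets_suffix {Q : Set ℝ} {s t : List Bool} (h : s <:+ t) : qsets Q t ⊆ qsets Q s := by
  obtain ⟨u, rfl⟩ := h
  induction u with
  | nil => simp
  | cons b u ih =>
      rw [List.cons_append]
      exact (qsets_subset Q b (u ++ s)).trans ih

lemma qsets_sub_diam {Q : Set ℝ} (hQc : IsCompact Q) (hQne : Q.Nonempty) : ∀ s : List Bool,
    sSup (qsets Q s) - sInf (qsets Q s) ≤ (sSup Q - sInf Q) / 2 ^ s.length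
  | [] => by simp [qsets]
  | b :: s => by
      have hc := qsets_compact hQc (Q := Q) s
      have hn := qsets_nonempty hQc hQne s
      have hc' := qsets_compact hQc (Q := Q) (b :: s)
      have hn' := qsets_nonempty hQc hQne (b :: s)
      have ih := qsets_sub_diam hQc hQne s
      set T := qsets Q s with hT
      set m := (sInf T + sSup T) / 2 with hm
      have hle : sInf T ≤ sSup T := csInf_le_csSup hn hc.bddBelow hc.bddAbove
      have hsub : qsets Q (b :: s) ⊆ T := qsets_subset Q b s
      have h1 : sInf T ≤ sInf (qsets Q (b :: s)) := csInf_le_csInf hc.bddBelow hn' hsub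
      have h2 : sSup (qsets Q (b :: s)) ≤ sSup T := csSup_le_csSup hc.bddAbove hn' hsub
      have hD : 0 ≤ sSup T - sInf T := by linarith
      cases b
      · have h3 : sSup (qsets Q (false :: s)) ≤ m := by
          apply csSup_le hn'
          intro x hx
          have : x ∈ Set.Iic m := by
            have := hx
            simp only [qsets, if_neg Bool.false_ne_true, mem_inter_iff] at this
            exact this.2
          exact this
        simp only [List.length_cons, pow_succ]
        rw [div_mul_eq_div_div]
        have : sSup (qsets Q (false :: s)) - sInf (qsets Q (false :: s)) ≤ (sSup T - sInf T) / 2 := by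
          rw [hm] at h3; linarith
        linarith [ih, div_le_div_of_nonneg_right (c := 2) ih (by norm_num), this,
          le_refl ((1:ℝ)/2)]
      · have h3 : m ≤ sInf (qsets Q (true :: s)) := by
          apply le_csInf hn'
          intro x hx
          have : x ∈ Set.Ici m := by
            have := hx
            simp only [qsets, if_pos rfl, mem_inter_iff] at this
            exact this.2
          exact this
        simp only [List.length_cons, pow_succ]
        rw [div_mul_eq_div_div]
        have : sSup (qsets Q (true :: s)) - sInf (qsets Q (true :: s)) ≤ (sSup T - sInf T) / 2 := by
          rw [hm] at h3; linarith
        linarith [div_le_div_of_nonneg_right (c := 2) ih (by norm_num)]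

lemma qsets_dist {Q : Set ℝ} (hQc : IsCompact Q) (hQne : Q.Nonempty) {s : List Bool} {a b : ℝ}
    (ha : a ∈ qsets Q s) (hb : b ∈ qsets Q s) :
    |a - b| ≤ (sSup Q - sInf Q) / 2 ^ s.length := by
  have hc := qsets_compact hQc (Q := Q) s
  have := qsets_sub_diam hQc hQne s
  have ha1 := csInf_le hc.bddBelow ha
  have ha2 := le_csSup hc.bddAbove ha
  have hb1 := csInf_le hc.bddBelow hb
  have hb2 := le_csSup hc.bddAbove hb
  rw [abs_sub_le_iff]
  constructor <;> linarith

lemma qsets_cover {Q : Set ℝ} {s : List Bool} {t : ℝ} (ht : t ∈ qsets Q s) :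
    ∃ b, t ∈ qsets Q (b :: s) := by
  rcases le_total t ((sInf (qsets Q s) + sSup (qsets Q s)) / 2) with h | h
  · refine ⟨false, ?_⟩
    simp only [qsets, if_neg Bool.false_ne_true, mem_inter_iff, mem_Iic]
    exact ⟨ht, h⟩
  · refine ⟨true, ?_⟩
    simp only [qsets, if_pos, mem_inter_iff, mem_Ici]
    exact ⟨ht, h⟩

noncomputable def qpt (Q : Set ℝ) (s : List Bool) : ℝ := sInf (qsets Q s)

lemma qpt_mem {Q : Set ℝ} (hQc : IsCompact Q) (hQne : Q.Nonempty) (s : List Bool) :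
    qpt Q s ∈ qsets Q s :=
  (qsets_compact hQc s).sInf_mem (qsets_nonempty hQc hQne s)

lemma qpt_mem_Q {Q : Set ℝ} (hQc : IsCompact Q) (hQne : Q.Nonempty) (s : List Bool) :
    qpt Q s ∈ Q :=
  qsets_suffix List.nil_suffix (qpt_mem hQc hQne s)

open Classical in
noncomputable def cchain {K : Type*} (B : List Bool → Set K) : ℕ → K → List Bool
  | 0, _ => []
  | n+1, x =>
      let s := cchain B n x
      if x ∈ B (false :: s) then false :: s
      else if x ∈ B (true :: s) then true :: s
      else s

section chain
variable {K : Type*} {B : List Bool → Set K} {x : K}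

lemma cchain_succ_cases (B : List Bool → Set K) (n : ℕ) (x : K) :
    (x ∈ B (false :: cchain B n x) ∧ cchain B (n+1) x = false :: cchain B n x) ∨
    (x ∉ B (false :: cchain B n x) ∧ x ∈ B (true :: cchain B n x) ∧
      cchain B (n+1) x = true :: cchain B n x) ∨
    (x ∉ B (false :: cchain B n x) ∧ x ∉ B (true :: cchain B n x) ∧
      cchain B (n+1) x = cchain B n x) := by
  classical
  by_cases h1 : x ∈ B (false :: cchain B n x)
  · left; exact ⟨h1, by simp [cchain, h1]⟩
  · by_cases h2 : x ∈ B (true :: cchain B n x)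
    · right; left; exact ⟨h1, h2, by simp [cchain, h1, h2]⟩
    · right; right; exact ⟨h1, h2, by simp [cchain, h1, h2]⟩

lemma cchain_suffix_succ (B : List Bool → Set K) (n : ℕ) (x : K) :
    cchain B n x <:+ cchain B (n+1) x := by
  rcases cchain_succ_cases B n x with ⟨_, h⟩ | ⟨_, _, h⟩ | ⟨_, _, h⟩ <;> rw [h] <;>
    exact List.suffix_cons _ _

lemma cchain_suffix (B : List Bool → Set K) {n m : ℕ} (h : n ≤ m) (x : K) :
    cchain B n x <:+ cchain B m x := by
  induction m, h using Nat.le_induction with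
  | base => exact List.suffix_rfl
  | succ m hm ih => exact ih.trans (cchain_suffix_succ B m x)

lemma cchain_mem (hx : x ∈ B []) : ∀ n, x ∈ B (cchain B n x)
  | 0 => by simpa [cchain] using hx
  | n+1 => by
      rcases cchain_succ_cases B n x with ⟨h1, h⟩ | ⟨_, h2, h⟩ | ⟨_, _, h⟩ <;> rw [h]
      · exact h1
      · exact h2
      · exact cchain_mem hx n

lemma cchain_stall {n : ℕ} (h : cchain B (n+1) x = cchain B n x) :
    ∀ m, n ≤ m → cchain B m x = cchain B n x := by
  have hnot : x ∉ B (false :: cchain B n x) ∧ x ∉ B (true :: cchain B n x) := by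
    rcases cchain_succ_cases B n x with ⟨h1, he⟩ | ⟨_, h2, he⟩ | ⟨h1, h2, _⟩
    · rw [he] at h; exact absurd h (List.cons_ne_self _ _)
    · rw [he] at h; exact absurd h (List.cons_ne_self _ _)
    · exact ⟨h1, h2⟩
  intro m hm
  induction m, hm using Nat.le_induction with
  | base => rfl
  | succ m hm ih =>
      rcases cchain_succ_cases B m x with ⟨h1, he⟩ | ⟨_, h2, he⟩ | ⟨_, _, he⟩
      · rw [ih] at h1; exact absurd h1 hnot.1
      · rw [ih] at h2; exact absurd h2 hnot.2
      · rw [he, ih]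

lemma cchain_length : ∀ n, (cchain B n x).length ≤ n
  | 0 => by simp [cchain]
  | n+1 => by
      rcases cchain_succ_cases B n x with ⟨_, h⟩ | ⟨_, _, h⟩ | ⟨_, _, h⟩ <;> rw [h]
      · simpa using Nat.succ_le_succ (cchain_length n)
      · simpa using Nat.succ_le_succ (cchain_length n)
      · exact (cchain_length n).trans (Nat.le_succ n)

lemma cchain_len_or : ∀ n : ℕ, (cchain B n x).length = n ∨
    ∀ m, n ≤ m → cchain B m x = cchain B n x
  | 0 => Or.inl (by simp [cchain])
  | n+1 => by
      rcases cchain_len_or n with hl | hst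
      · rcases cchain_succ_cases B n x with ⟨_, h⟩ | ⟨_, _, h⟩ | ⟨_, _, h⟩
        · left; rw [h]; simp [hl]
        · left; rw [h]; simp [hl]
        · refine Or.inr fun m hm => ?_
          rw [cchain_stall h m (Nat.le_of_succ_le hm), cchain_stall h (n+1) (Nat.le_succ n)]
      · right
        intro m hm
        rw [hst m (Nat.le_of_succ_le hm), hst (n+1) (Nat.le_succ n)]

lemma cchain_follows (hdis : ∀ s, B (false :: s) ∩ B (true :: s) = ∅)
    (S : ℕ → List Bool) (hS0 : S 0 = []) (hSsucc : ∀ n, ∃ b, S (n+1) = b :: S n)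
    (hxS : ∀ n, x ∈ B (S n)) : ∀ n, cchain B n x = S n
  | 0 => by simp [cchain, hS0]
  | n+1 => by
      have ih : cchain B n x = S n := cchain_follows hdis S hS0 hSsucc hxS n
      obtain ⟨b, hb⟩ := hSsucc n
      have hxb : x ∈ B (b :: S n) := by rw [← hb]; exact hxS (n+1)
      rcases cchain_succ_cases B n x with ⟨h1, h⟩ | ⟨h1, h2, h⟩ | ⟨h1, h2, h⟩
      · cases b
        · rw [h, hb, ih]
        · exfalso
          rw [ih] at h1
          have : x ∈ B (false :: S n) ∩ B (true :: S n) := ⟨h1, hxb⟩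
          rw [hdis] at this
          exact this
      · cases b
        · exfalso; rw [ih] at h1; exact h1 hxb
        · rw [h, hb, ih]
      · exfalso
        rw [ih] at h1 h2
        cases b
        · exact h1 hxb
        · exact h2 hxb

end chain

lemma cchain_loc {K : Type*} [TopologicalSpace K] {B : List Bool → Set K}
    (hcl : ∀ s, IsClopen (B s)) :
    ∀ n, ∀ x : K, ∃ V : Set K, IsOpen V ∧ x ∈ V ∧ ∀ y ∈ V, cchain B n y = cchain B n x
  | 0 => fun x => ⟨Set.univ, isOpen_univ, trivial, fun _ _ => rfl⟩
  | n+1 => fun x => by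
      obtain ⟨V, hV, hxV, hVc⟩ := cchain_loc hcl n x
      set s := cchain B n x with hs
      rcases cchain_succ_cases B n x with ⟨h1, h⟩ | ⟨h1, h2, h⟩ | ⟨h1, h2, h⟩
      · refine ⟨V ∩ B (false :: s), hV.inter (hcl _).2, ⟨hxV, h1⟩, fun y hy => ?_⟩
        have hyn : cchain B n y = s := hVc y hy.1
        rcases cchain_succ_cases B n y with ⟨g1, g⟩ | ⟨g1, g2, g⟩ | ⟨g1, g2, g⟩
        · rw [g, hyn, h, hs]
        · rw [hyn] at g1; exact absurd hy.2 g1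
        · rw [hyn] at g1; exact absurd hy.2 g1
      · refine ⟨V ∩ B (true :: s) ∩ (B (false :: s))ᶜ,
          (hV.inter (hcl _).2).inter (hcl _).1.isOpen_compl, ⟨⟨hxV, h2⟩, h1⟩, fun y hy => ?_⟩
        have hyn : cchain B n y = s := hVc y hy.1.1
        rcases cchain_succ_cases B n y with ⟨g1, g⟩ | ⟨g1, g2, g⟩ | ⟨g1, g2, g⟩
        · rw [hyn] at g1; exact absurd g1 hy.2
        · rw [g, hyn, h, hs]
        · rw [hyn] at g2; exact absurd hy.1.2 g2
      · refine ⟨V ∩ (B (false :: s))ᶜ ∩ (B (true :: s))ᶜ,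
          (hV.inter (hcl _).1.isOpen_compl).inter (hcl _).1.isOpen_compl,
          ⟨⟨hxV, h1⟩, h2⟩, fun y hy => ?_⟩
        have hyn : cchain B n y = s := hVc y hy.1.1
        rcases cchain_succ_cases B n y with ⟨g1, g⟩ | ⟨g1, g2, g⟩ | ⟨g1, g2, g⟩
        · rw [hyn] at g1; exact absurd g1 hy.1.2
        · rw [hyn] at g2; exact absurd g2 hy.2
        · rw [g, hyn, h, hs]

lemma exists_embed_fun {K : Type*} [TopologicalSpace K] [CompactSpace K]
    (B : List Bool → Set K) (hBne : ∀ s, (B s).Nonempty) (hBcl : ∀ s, IsClopen (B s))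
    (hBsub : ∀ s b, B (b :: s) ⊆ B s) (hBdis : ∀ s, B (false :: s) ∩ B (true :: s) = ∅)
    (Q : Set ℝ) (hQc : IsCompact Q) (hQne : Q.Nonempty) :
    ∃ h : K → ℝ, Continuous h ∧ (∀ x, x ∉ B [] → h x = 0) ∧ h '' (B []) = Q := by
  classical
  set D := sSup Q - sInf Q with hDdef
  have hD : 0 ≤ D := by
    have := csInf_le_csSup hQne hQc.bddBelow hQc.bddAbove
    simp [hDdef]; linarith
  set hN : ℕ → K → ℝ := fun n x => if x ∈ B [] then qpt Q (cchain B n x) else 0 with hNdef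
  -- Cauchy estimate
  have key : ∀ (x : K) (N n m : ℕ), N ≤ n → N ≤ m → dist (hN n x) (hN m x) ≤ D / 2 ^ N := by
    intro x N n m hn hm
    by_cases hx : x ∈ B []
    · simp only [hNdef, if_pos hx]
      rcases cchain_len_or (B := B) (x := x) N with hl | hst
      · have h1 : qpt Q (cchain B n x) ∈ qsets Q (cchain B N x) :=
          qsets_suffix (cchain_suffix B hn x) (qpt_mem hQc hQne _)
        have h2 : qpt Q (cchain B m x) ∈ qsets Q (cchain B N x) :=
          qsets_suffix (cchain_suffix B hm x) (qpt_mem hQc hQne _)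
        rw [Real.dist_eq]
        calc |qpt Q (cchain B n x) - qpt Q (cchain B m x)|
            ≤ D / 2 ^ (cchain B N x).length := qsets_dist hQc hQne h1 h2
          _ = D / 2 ^ N := by rw [hl]
      · rw [hst n hn, hst m hm]
        simp only [dist_self]
        positivity
    · simp only [hNdef, if_neg hx, dist_self]
      positivity
  have hb : Filter.Tendsto (fun n : ℕ => D / 2 ^ n) Filter.atTop (nhds 0) := by
    have h2 : Filter.Tendsto (fun n : ℕ => ((1:ℝ)/2) ^ n) Filter.atTop (nhds 0) :=
      tendsto_pow_atTop_nhds_zero_of_lt_one (by norm_num) (by norm_num)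
    have := h2.const_mul D
    simpa [mul_one_div, div_pow, mul_zero, div_eq_mul_inv] using this
  have hcauchy : ∀ x : K, CauchySeq (fun n => hN n x) := fun x =>
    cauchySeq_of_le_tendsto_0 (fun N => D / 2 ^ N) (fun n m N hn hm => key x N n m hn hm) hb
  have hex : ∀ x : K, ∃ L : ℝ, Filter.Tendsto (fun n => hN n x) Filter.atTop (nhds L) :=
    fun x => cauchySeq_tendsto_of_complete (hcauchy x)
  choose h hh using hex
  -- uniform bound
  have hub : ∀ (n : ℕ) (x : K), dist (h x) (hN n x) ≤ D / 2 ^ n := by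
    intro n x
    have h1 : Filter.Tendsto (fun m => dist (hN m x) (hN n x)) Filter.atTop
        (nhds (dist (h x) (hN n x))) := ((hh x).dist tendsto_const_nhds)
    refine le_of_tendsto h1 ?_
    filter_upwards [Filter.eventually_ge_atTop n] with m hm
    exact key x n m n hm le_rfl
  -- continuity of approximants
  have hNc : ∀ n, Continuous (hN n) := by
    intro n
    apply IsLocallyConstant.continuous
    rw [IsLocallyConstant.iff_exists_open]
    intro x
    obtain ⟨V, hV, hxV, hVc⟩ := cchain_loc hBcl n x
    by_cases hx : x ∈ B []
    · refine ⟨V ∩ B [], hV.inter (hBcl []).2, ⟨hxV, hx⟩, fun y hy => ?_⟩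
      simp only [hNdef, if_pos hy.2, if_pos hx, hVc y hy.1]
    · refine ⟨V ∩ (B [])ᶜ, hV.inter (hBcl []).1.isOpen_compl, ⟨hxV, hx⟩, fun y hy => ?_⟩
      simp only [hNdef, if_neg hy.2, if_neg hx]
  -- uniform convergence and continuity
  have hU : TendstoUniformly (fun n x => hN n x) h Filter.atTop := by
    rw [Metric.tendstoUniformly_iff]
    intro ε hε
    have hev : ∀ᶠ n : ℕ in Filter.atTop, D / 2 ^ n < ε := hb.eventually (gt_mem_nhds hε)
    filter_upwards [hev] with n hn x
    exact lt_of_le_of_lt (hub n x) hn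
  have hcont : Continuous h := hU.continuous (Filter.Eventually.of_forall hNc).frequently
  refine ⟨h, hcont, ?_, ?_⟩
  · intro x hx
    refine tendsto_nhds_unique (hh x) ?_
    simpa only [hNdef, if_neg hx] using (tendsto_const_nhds : Filter.Tendsto _ _ (nhds (0:ℝ)))
  · apply Set.Subset.antisymm
    · rintro y ⟨x, hx, rfl⟩
      refine hQc.isClosed.mem_of_tendsto (hh x) (Filter.Eventually.of_forall fun n => ?_)
      simp only [hNdef, if_pos hx]
      exact qpt_mem_Q hQc hQne _
    · intro t ht
      have step : ∀ s : List Bool, t ∈ qsets Q s → ∃ b, t ∈ qsets Q (b :: s) :=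
        fun s hs => qsets_cover hs
      set L : ℕ → {s : List Bool // t ∈ qsets Q s} := fun n =>
        Nat.rec ⟨[], ht⟩ (fun _ p => ⟨(step p.1 p.2).choose :: p.1, (step p.1 p.2).choose_spec⟩) n
        with hLdef
      have hL0 : (L 0).1 = [] := rfl
      have hLsucc : ∀ n, ∃ b, (L (n+1)).1 = b :: (L n).1 := fun n => ⟨_, rfl⟩
      have hLlen : ∀ n, (L n).1.length = n := by
        intro n
        induction n with
        | zero => rfl
        | succ n ih =>
            obtain ⟨b, hb'⟩ := hLsucc n
            rw [hb']
            simp [ih]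
      have hisub : ∀ n, B (L (n+1)).1 ⊆ B (L n).1 := by
        intro n
        obtain ⟨b, hb'⟩ := hLsucc n
        rw [hb']
        exact hBsub _ b
      have hnon : (⋂ n, B (L n).1).Nonempty := by
        apply IsCompact.nonempty_iInter_of_sequence_nonempty_isCompact_isClosed
          (fun n => B (L n).1) hisub (fun n => hBne _)
          ((hBcl _).1.isCompact) (fun n => (hBcl _).1)
      obtain ⟨x, hx⟩ := hnon
      have hxn : ∀ n, x ∈ B (L n).1 := fun n => Set.mem_iInter.1 hx n
      have hx0 : x ∈ B [] := by rw [← hL0]; exact hxn 0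
      have hch : ∀ n, cchain B n x = (L n).1 :=
        cchain_follows hBdis (fun n => (L n).1) hL0 hLsucc hxn
      have htend : Filter.Tendsto (fun n => hN n x) Filter.atTop (nhds t) := by
        rw [tendsto_iff_dist_tendsto_zero]
        apply squeeze_zero (fun n => dist_nonneg) (g := fun n => D / 2 ^ n) _ hb
        intro n
        simp only [hNdef, if_pos hx0, hch n, Real.dist_eq]
        calc |qpt Q (L n).1 - t| ≤ D / 2 ^ (L n).1.length :=
              qsets_dist hQc hQne (qpt_mem hQc hQne _) ((L n).2)
          _ = D / 2 ^ n := by rw [hLlen]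
      exact ⟨x, hx0, tendsto_nhds_unique (hh x) htend⟩

open Classical in
noncomputable def embedFun {K ι : Type*} (U : ι → Set K) (hfam : ι → K → ℝ)
    (g : ι → ℝ) (x : K) : ℝ :=
  if hx : ∃ α, x ∈ U α then g hx.choose * hfam hx.choose x else 0

lemma embedFun_of_mem {K ι : Type*} {U : ι → Set K}
    (hdisj : ∀ α β, α ≠ β → Disjoint (U α) (U β)) (hfam : ι → K → ℝ) (g : ι → ℝ)
    {α : ι} {x : K} (hx : x ∈ U α) : embedFun U hfam g x = g α * hfam α x := by
  classical
  have hex : ∃ β, x ∈ U β := ⟨α, hx⟩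
  have heq : embedFun U hfam g x = g hex.choose * hfam hex.choose x := by
    simp only [embedFun]
    rw [dif_pos hex]
  have hchoose : hex.choose = α := by
    by_contra hne
    exact Set.disjoint_left.1 (hdisj _ _ hne) hex.choose_spec hx
  rw [heq, hchoose]

lemma embedFun_of_not_mem {K ι : Type*} {U : ι → Set K} (hfam : ι → K → ℝ) (g : ι → ℝ)
    {x : K} (hx : ∀ α, x ∉ U α) : embedFun U hfam g x = 0 := by
  simp only [embedFun]
  rw [dif_neg]
  push_neg
  exact hx


/-- Let `K` be compact Hausdorff, `ι` uncountable, `U : ι → Set K` pairwise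
disjoint nonempty clopen sets each admitting a Cantor scheme of clopen sets. If `Pfam` is a family
of compact subsets of `ℝ` with `{0} ∉ Pfam` containing some `P` such that
`(⋃ i, c i • P) ∪ {0} ∈ Pfam` for each not-identically-zero null sequence `c`, then
`{f ∈ C(K, ℝ) | range f ∈ Pfam} ∪ {0}` contains an isometric copy of `c₀(ι)`. -/
theorem stmt2 {K : Type*} [TopologicalSpace K] [CompactSpace K] [T2Space K]
    {ι : Type*} [TopologicalSpace ι] [DiscreteTopology ι] [Uncountable ι]
    (U : ι → Set K) (hne : ∀ α, (U α).Nonempty) (hclopen : ∀ α, IsClopen (U α))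
    (hdisj : ∀ α β, α ≠ β → Disjoint (U α) (U β))
    (hscheme : ∀ α, ∃ A : List Bool → Set K, IsClopenCantorScheme (U α) A)
    (Pfam : Set (Set ℝ)) (hPcompact : ∀ P ∈ Pfam, IsCompact P) (h0 : ({0} : Set ℝ) ∉ Pfam)
    (hP : ∃ P ∈ Pfam, ∀ c : ℕ → ℝ, Filter.Tendsto c Filter.atTop (nhds 0) → c ≠ 0 →
      ((⋃ i : ℕ, c i • P) ∪ {0}) ∈ Pfam) :
    ∃ T : C₀(ι, ℝ) →ₗᵢ[ℝ] C(K, ℝ),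
      ∀ g : C₀(ι, ℝ), g ≠ 0 → Set.range (T g) ∈ Pfam := by
  classical
  obtain ⟨P, hPmem, hPuniv⟩ := hP
  have hPc : IsCompact P := hPcompact P hPmem
  -- P is nonempty
  have hPne : P.Nonempty := by
    by_contra hemp
    rw [Set.not_nonempty_iff_eq_empty] at hemp
    have hc0 : Filter.Tendsto (fun n : ℕ => ((1:ℝ)/2)^n) Filter.atTop (nhds 0) :=
      tendsto_pow_atTop_nhds_zero_of_lt_one (by norm_num) (by norm_num)
    have hcne : (fun n : ℕ => ((1:ℝ)/2)^n) ≠ 0 := by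
      intro hc
      have := congrFun hc 0
      norm_num at this
    have := hPuniv _ hc0 hcne
    rw [hemp] at this
    simp only [smul_set_empty, Set.iUnion_empty, Set.empty_union] at this
    exact h0 this
  -- the normalizing constant
  set M := sSup (abs '' P) with hMdef
  have habs : IsCompact (abs '' P) := hPc.image continuous_abs
  have habsne : (abs '' P).Nonempty := hPne.image _
  obtain ⟨t₀, ht₀P, ht₀⟩ := habs.sSup_mem habsne
  have hMub : ∀ p ∈ P, |p| ≤ M := fun p hp => le_csSup habs.bddAbove ⟨p, hp, rfl⟩
  have hMpos : 0 < M := by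
    rcases lt_or_ge 0 M with h | h
    · exact h
    · exfalso
      apply h0
      have hPeq : P = {0} := by
        apply Set.Subset.antisymm
        · intro p hp
          have h1 := hMub p hp
          have habs0 : |p| = 0 := le_antisymm (h1.trans h) (abs_nonneg p)
          simp [abs_eq_zero.1 habs0]
        · intro p hp
          obtain ⟨p₀, hp₀⟩ := hPne
          have h1 := hMub p₀ hp₀
          have hp0 : p₀ = 0 := abs_eq_zero.1 (le_antisymm (h1.trans h) (abs_nonneg p₀))
          simp only [Set.mem_singleton_iff] at hp
          rw [hp, ← hp0]
          exact hp₀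
      rw [← hPeq]
      exact hPmem
  -- the target set Q
  set Q : Set ℝ := M⁻¹ • P with hQdef
  have hQim : Q = (fun p => M⁻¹ * p) '' P := by
    rw [hQdef, ← Set.image_smul]
    rfl
  have hQc : IsCompact Q := by
    rw [hQim]
    exact hPc.image (continuous_const.mul continuous_id)
  have hQne : Q.Nonempty := hPne.smul_set
  have hQb : ∀ q ∈ Q, |q| ≤ 1 := by
    intro q hq
    rw [hQim] at hq
    obtain ⟨p, hp, rfl⟩ := hq
    rw [abs_mul, abs_inv, abs_of_pos hMpos]
    rw [inv_mul_le_iff₀ hMpos, mul_one]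
    exact hMub p hp
  have hQone : M⁻¹ * t₀ ∈ Q ∧ |M⁻¹ * t₀| = 1 := by
    constructor
    · rw [hQim]; exact ⟨t₀, ht₀P, rfl⟩
    · rw [abs_mul, abs_inv, abs_of_pos hMpos, ht₀]
      field_simp
      exact hMdef.symm
  -- the Cantor scheme functions
  choose A hA using hscheme
  have hexh : ∀ α, ∃ h : K → ℝ, Continuous h ∧ (∀ x, x ∉ U α → h x = 0) ∧ h '' (U α) = Q := by
    intro α
    obtain ⟨hA0, hAne, hAcl, hAsub, hAdis⟩ := hA α
    obtain ⟨h, h1, h2, h3⟩ := exists_embed_fun (fun s => A α s.reverse)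
      (fun s => hAne _) (fun s => hAcl _)
      (fun s b => by simpa [List.reverse_cons] using hAsub s.reverse b)
      (fun s => by simpa [List.reverse_cons] using hAdis s.reverse)
      Q hQc hQne
    simp only [List.reverse_nil] at h2 h3
    rw [hA0] at h2 h3
    exact ⟨h, h1, h2, h3⟩
  choose hfam hfc hf0 hfim using hexh
  have hfQ : ∀ α x, x ∈ U α → hfam α x ∈ Q := by
    intro α x hx
    rw [← hfim α]
    exact Set.mem_image_of_mem _ hx
  have hfb : ∀ α x, |hfam α x| ≤ 1 := by
    intro α x
    by_cases hx : x ∈ U α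
    · exact hQb _ (hfQ α x hx)
    · rw [hf0 α x hx]; simp
  have hfone : ∀ α, ∃ x ∈ U α, |hfam α x| = 1 := by
    intro α
    have : M⁻¹ * t₀ ∈ hfam α '' U α := by rw [hfim α]; exact hQone.1
    obtain ⟨x, hx, hxe⟩ := this
    exact ⟨x, hx, by rw [hxe]; exact hQone.2⟩
  -- a point outside all U α
  have hout : ∃ x : K, ∀ α, x ∉ U α := by
    by_contra hcon
    push_neg at hcon
    have hcover : (Set.univ : Set K) ⊆ ⋃ α, U α := by
      intro x _
      obtain ⟨α, hα⟩ := hcon x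
      exact Set.mem_iUnion.2 ⟨α, hα⟩
    obtain ⟨t, ht⟩ := isCompact_univ.elim_finite_subcover U (fun α => (hclopen α).2) hcover
    obtain ⟨β, hβ⟩ := Infinite.exists_notMem_finset t
    obtain ⟨y, hy⟩ := hne β
    have : y ∈ ⋃ α ∈ t, U α := ht (Set.mem_univ y)
    obtain ⟨α, hαt, hyα⟩ := by simpa using this
    have hαβ : α ≠ β := fun he => hβ (he ▸ hαt)
    exact Set.disjoint_left.1 (hdisj α β hαβ) hyα hy
  -- finite superlevel sets
  have hfin : ∀ (g : C₀(ι, ℝ)) (ε : ℝ), 0 < ε → {α | ε ≤ |g α|}.Finite := by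
    intro g ε hε
    have hz : Filter.Tendsto g (Filter.cocompact ι) (nhds 0) := g.zero_at_infty'
    rw [Filter.cocompact_eq_cofinite] at hz
    have h1 := Metric.tendsto_nhds.1 hz ε hε
    rw [Filter.eventually_cofinite] at h1
    apply h1.subset
    intro α hα
    simp only [Set.mem_setOf_eq, Real.dist_0_eq_abs, not_lt]
    exact hα
  have hgb : ∀ (g : C₀(ι, ℝ)) (α : ι), |g α| ≤ ‖g‖ := by
    intro g α
    rw [← ZeroAtInftyContinuousMap.norm_toBCF_eq_norm]
    simpa [Real.norm_eq_abs] using g.toBCF.norm_coe_le_norm α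
  have hT0b : ∀ (g : C₀(ι, ℝ)) (x : K), |embedFun U hfam (⇑g) x| ≤ ‖g‖ := by
    intro g x
    by_cases hx : ∃ α, x ∈ U α
    · obtain ⟨α, hα⟩ := hx
      rw [embedFun_of_mem hdisj _ _ hα, abs_mul]
      calc |g α| * |hfam α x| ≤ ‖g‖ * 1 :=
            mul_le_mul (hgb g α) (hfb α x) (abs_nonneg _) (norm_nonneg g)
        _ = ‖g‖ := mul_one _
    · push_neg at hx
      rw [embedFun_of_not_mem _ _ hx]
      simpa using norm_nonneg g
  have hT0cont : ∀ g : C₀(ι, ℝ), Continuous (embedFun U hfam ⇑g) := by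
    intro g
    rw [continuous_iff_continuousAt]
    intro x
    by_cases hx : ∃ α, x ∈ U α
    · obtain ⟨α, hα⟩ := hx
      have hc : ContinuousAt (fun y => g α * hfam α y) x :=
        (continuous_const.mul (hfc α)).continuousAt
      apply hc.congr
      filter_upwards [(hclopen α).2.mem_nhds hα] with y hy
      exact (embedFun_of_mem hdisj _ _ hy).symm
    · push_neg at hx
      have h0x : embedFun U hfam (⇑g) x = 0 := embedFun_of_not_mem _ _ hx
      rw [ContinuousAt, h0x, Metric.tendsto_nhds]
      intro ε hε
      have hF : {α | ε/2 ≤ |g α|}.Finite := hfin g (ε/2) (by linarith)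
      have hV : IsOpen (⋂ α ∈ {α | ε/2 ≤ |g α|}, (U α)ᶜ) :=
        hF.isOpen_biInter (fun α _ => (hclopen α).1.isOpen_compl)
      have hxV : x ∈ ⋂ α ∈ {α | ε/2 ≤ |g α|}, (U α)ᶜ := by
        simp only [Set.mem_iInter]
        exact fun α _ => hx α
      filter_upwards [hV.mem_nhds hxV] with y hy
      rw [Real.dist_0_eq_abs]
      by_cases hy' : ∃ α, y ∈ U α
      · obtain ⟨α, hα⟩ := hy'
        rw [embedFun_of_mem hdisj _ _ hα, abs_mul]
        have hαF : ¬ (ε/2 ≤ |g α|) := by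
          intro hcon
          have := Set.mem_iInter₂.1 hy α hcon
          exact this hα
        push_neg at hαF
        calc |g α| * |hfam α y| ≤ |g α| * 1 :=
              mul_le_mul_of_nonneg_left (hfb α y) (abs_nonneg _)
          _ = |g α| := mul_one _
          _ < ε := by linarith
      · push_neg at hy'
        rw [embedFun_of_not_mem _ _ hy']
        simpa using hε
  -- the linear isometry
  refine ⟨⟨{ toFun := fun g => ⟨embedFun U hfam ⇑g, hT0cont g⟩
             map_add' := ?_
             map_smul' := ?_ }, ?_⟩, ?_⟩
  · intro g g'
    ext x
    simp only [ContinuousMap.coe_mk, ContinuousMap.add_apply]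
    by_cases hx : ∃ α, x ∈ U α
    · obtain ⟨α, hα⟩ := hx
      rw [embedFun_of_mem hdisj _ _ hα, embedFun_of_mem hdisj _ _ hα,
        embedFun_of_mem hdisj _ _ hα]
      simp only [ZeroAtInftyContinuousMap.coe_add, Pi.add_apply]
      ring
    · push_neg at hx
      rw [embedFun_of_not_mem _ _ hx, embedFun_of_not_mem _ _ hx,
        embedFun_of_not_mem _ _ hx]
      ring
  · intro r g
    ext x
    simp only [ContinuousMap.coe_mk, RingHom.id_apply, ContinuousMap.coe_smul, Pi.smul_apply,
      smul_eq_mul]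
    by_cases hx : ∃ α, x ∈ U α
    · obtain ⟨α, hα⟩ := hx
      rw [embedFun_of_mem hdisj _ _ hα, embedFun_of_mem hdisj _ _ hα]
      simp only [ZeroAtInftyContinuousMap.coe_smul, Pi.smul_apply, smul_eq_mul]
      ring
    · push_neg at hx
      rw [embedFun_of_not_mem _ _ hx, embedFun_of_not_mem _ _ hx]
      ring
  · -- norm
    intro g
    simp only [LinearMap.coe_mk, AddHom.coe_mk]
    apply le_antisymm
    · refine (ContinuousMap.norm_le _ (norm_nonneg g)).2 (fun x => ?_)
      simpa [Real.norm_eq_abs] using hT0b g x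
    · rw [← ZeroAtInftyContinuousMap.norm_toBCF_eq_norm]
      refine (BoundedContinuousFunction.norm_le (norm_nonneg _)).2 (fun α => ?_)
      obtain ⟨x, hxU, hx1⟩ := hfone α
      have heq : ‖(⟨embedFun U hfam ⇑g, hT0cont g⟩ : C(K, ℝ)) x‖ = |g α| := by
        simp only [ContinuousMap.coe_mk, Real.norm_eq_abs]
        rw [embedFun_of_mem hdisj _ _ hxU, abs_mul, hx1, mul_one]
      calc ‖g.toBCF α‖ = |g α| := by simp [Real.norm_eq_abs]
        _ ≤ ‖(⟨embedFun U hfam ⇑g, hT0cont g⟩ : C(K, ℝ))‖ :=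
            heq ▸ ContinuousMap.norm_coe_le_norm _ x
  · -- range condition
    intro g hg
    have hco : Set.range (embedFun U hfam ⇑g) ∈ Pfam → _ := id
    show Set.range (embedFun U hfam ⇑g) ∈ Pfam
    -- support facts
    have hgex : ∃ α, g α ≠ 0 := by
      by_contra hno
      push_neg at hno
      exact hg (by ext α; exact hno α)
    set S := {α | g α ≠ 0} with hSdef
    have hScount : S.Countable := by
      have hsub : S ⊆ ⋃ n : ℕ, {α | (1:ℝ)/(n+1) ≤ |g α|} := by
        intro α hα
        have habs : 0 < |g α| := abs_pos.2 hα
        obtain ⟨n, hn⟩ := exists_nat_one_div_lt habs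
        exact Set.mem_iUnion.2 ⟨n, hn.le⟩
      refine (Set.countable_iUnion (fun n : ℕ =>
        (hfin g ((1:ℝ)/(n+1)) ?_).countable)).mono hsub
      positivity
    obtain ⟨f, hfinj⟩ := Set.countable_iff_exists_injective.1 hScount
    set c : ℕ → ℝ := Function.extend f (fun a : S => g a / M) 0 with hcdef
    have hext : ∀ a : S, c (f a) = g (a : ι) / M := fun a => hfinj.extend_apply _ _ a
    have hc0 : Filter.Tendsto c Filter.atTop (nhds 0) := by
      rw [← Nat.cofinite_eq_atTop, Metric.tendsto_nhds]
      intro ε hε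
      rw [Filter.eventually_cofinite]
      have hfin2 : {a : S | ε ≤ |g (a : ι) / M|}.Finite := by
        have h1 : {α : ι | ε * M ≤ |g α|}.Finite := hfin g (ε * M) (by positivity)
        have hsub : {a : S | ε ≤ |g (a : ι) / M|} ⊆ Subtype.val ⁻¹' {α | ε * M ≤ |g α|} := by
          intro a ha
          simp only [Set.mem_setOf_eq, abs_div, abs_of_pos hMpos] at ha
          rw [le_div_iff₀ hMpos] at ha
          exact ha
        exact (h1.preimage Subtype.val_injective.injOn).subset hsub
      apply (hfin2.image f).subset
      intro n hn
      simp only [Set.mem_setOf_eq, Real.dist_0_eq_abs, not_lt] at hn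
      have hcne : c n ≠ 0 := by
        intro hzero
        rw [hzero] at hn
        simp at hn
        linarith
      have hex2 : ∃ a : S, f a = n := by
        by_contra hno
        exact hcne (Function.extend_apply' _ _ _ hno)
      obtain ⟨a, ha⟩ := hex2
      refine ⟨a, ?_, ha⟩
      rw [← ha, hext a] at hn
      exact hn
    have hcnez : c ≠ 0 := by
      obtain ⟨α₀, hα₀⟩ := hgex
      intro hzero
      have := congrFun hzero (f ⟨α₀, hα₀⟩)
      rw [hext ⟨α₀, hα₀⟩] at this
      simp only [Pi.zero_apply] at this
      exact hα₀ (by field_simp at this; simpa using this)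
    have hrange : Set.range (embedFun U hfam ⇑g) = (⋃ i, c i • P) ∪ {0} := by
      apply Set.Subset.antisymm
      · rintro y ⟨x, rfl⟩
        by_cases hx : ∃ α, x ∈ U α
        · obtain ⟨α, hα⟩ := hx
          rw [embedFun_of_mem hdisj _ _ hα]
          by_cases hga : g α = 0
          · rw [hga, zero_mul]
            exact Set.mem_union_right _ rfl
          · apply Set.mem_union_left
            have hq := hfQ α x hα
            rw [hQdef] at hq
            obtain ⟨p, hp, hpe⟩ := hq
            simp only [smul_eq_mul] at hpe
            refine Set.mem_iUnion.2 ⟨f ⟨α, hga⟩, ?_⟩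
            have heq : g α * hfam α x = c (f ⟨α, hga⟩) • p := by
              rw [hext ⟨α, hga⟩, smul_eq_mul, ← hpe]
              field_simp
            rw [heq]
            exact Set.smul_mem_smul_set hp
        · push_neg at hx
          rw [embedFun_of_not_mem _ _ hx]
          exact Set.mem_union_right _ rfl
      · rintro y (hy | hy)
        · obtain ⟨i, hi⟩ := Set.mem_iUnion.1 hy
          obtain ⟨p, hp, hpe⟩ := hi
          simp only [smul_eq_mul] at hpe
          by_cases hex2 : ∃ a : S, f a = i
          · obtain ⟨a, rfl⟩ := hex2
            have hq : M⁻¹ * p ∈ Q := by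
              rw [hQim]
              exact ⟨p, hp, rfl⟩
            have him : M⁻¹ * p ∈ hfam (a : ι) '' U (a : ι) := by
              rw [hfim]
              exact hq
            obtain ⟨x, hxU, hxe⟩ := him
            refine ⟨x, ?_⟩
            rw [embedFun_of_mem hdisj _ _ hxU, hxe, ← hpe, hext a]
            field_simp
          · have hceq : c i = 0 := Function.extend_apply' _ _ _ hex2
            obtain ⟨xo, hxo⟩ := hout
            refine ⟨xo, ?_⟩
            rw [embedFun_of_not_mem _ _ hxo, ← hpe, hceq, zero_mul]
        · obtain ⟨xo, hxo⟩ := hout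
          rw [Set.mem_singleton_iff] at hy
          exact ⟨xo, by rw [embedFun_of_not_mem _ _ hxo, hy]⟩
    rw [hrange]
    exact hPuniv c hc0 hcnez
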